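/- For an odd positive integer r and the generalized quaternion group Q_ℓ (ℓ = 2^j ≥ 8) with virtual character Δ = 2ρ₀ − γ₁, the inner product ⟨Δ^r, ρ₀⟩ = ℓ^{-1} Σ_{g∈Q_ℓ} Δ(g)^r is an even integer. -/

import Mathlib

open Complex Matrix

/-- primitive (2n)-th root of unity ζ = e^{2πi/(2n)} = e^{4πi/ℓ} for ℓ = 4n. -/
noncomputable def zeta (n : ℕ) : ℂ := Complex.exp (2 * Real.pi * Complex.I / (2 * n))

/-- The 2-dimensional representation γ_u of the generalized quaternion group,
with γ_u(ξ) = diag(ζ^u, ζ^{-u}) and γ_u(J) = [[0,(-1)^u],[1,0]];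
here `a i` = ξ^i and `xa i` = J ξ^i. -/
noncomputable def gam (n : ℕ) (u : ℤ) : QuaternionGroup n → Matrix (Fin 2) (Fin 2) ℂ
  | .a i => !![zeta n ^ (u * (i.val : ℤ)), 0; 0, zeta n ^ (-(u * (i.val : ℤ)))]
  | .xa i => !![0, (-1 : ℂ) ^ u * zeta n ^ (-(u * (i.val : ℤ))); zeta n ^ (u * (i.val : ℤ)), 0]

/-- character of γ_u -/
noncomputable def chi (n : ℕ) (u : ℤ) (g : QuaternionGroup n) : ℂ := Matrix.trace (gam n u g)

/-- κ₁ : ξ ↦ -1, J ↦ 1 -/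
def kappa1 (n : ℕ) : QuaternionGroup n → ℂ
  | .a i => (-1) ^ i.val
  | .xa i => (-1) ^ i.val

/-- κ₂ : ξ ↦ 1, J ↦ -1 -/
def kappa2 (n : ℕ) : QuaternionGroup n → ℂ
  | .a _ => 1
  | .xa _ => -1

/-- κ₃ : ξ ↦ -1, J ↦ -1 -/
def kappa3 (n : ℕ) : QuaternionGroup n → ℂ
  | .a i => (-1) ^ i.val
  | .xa i => -(-1) ^ i.val

/-- Θ₁ : value ℓ/4 = n at ±I = ξ^{±n/2}, value -2 at ξ^{2i}J, 0 otherwise. -/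
def Theta1 (n : ℕ) : QuaternionGroup n → ℂ
  | .a i => if i = ((n / 2 : ℕ) : ZMod (2 * n)) ∨ i = -((n / 2 : ℕ) : ZMod (2 * n)) then (n : ℂ) else 0
  | .xa i => if Even i.val then -2 else 0

/-- Θ₂ : value ℓ/4 = n at ±I, value -2 at ξ^{2i+1}J, 0 otherwise. -/
def Theta2 (n : ℕ) : QuaternionGroup n → ℂ
  | .a i => if i = ((n / 2 : ℕ) : ZMod (2 * n)) ∨ i = -((n / 2 : ℕ) : ZMod (2 * n)) then (n : ℂ) else 0
  | .xa i => if Even i.val then 0 else -2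

/-- Δ(g) = det(I₂ - γ₁(g)) -/
noncomputable def Del (n : ℕ) (g : QuaternionGroup n) : ℂ := Matrix.det (1 - gam n 1 g)



lemma even_choose (s : ℕ) : Nat.choose (2*s+2) (s+1) = 2 * Nat.choose (2*s+1) s := by
  have h1 : Nat.choose (2*s+1) s = Nat.choose (2*s+1) (s+1) := by
    have := Nat.choose_symm (n := 2*s+1) (k := s+1) (by omega)
    have e : 2*s+1 - (s+1) = s := by omega
    rw [e] at this; exact this
  have h2 : Nat.choose (2*s+2) (s+1) = Nat.choose (2*s+1) s + Nat.choose (2*s+1) (s+1) := by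
    have := Nat.choose_succ_succ' (2*s+1) s
    simpa [show 2*s+1+1 = 2*s+2 by omega] using this
  omega

lemma lemB (r k : ℕ) (hk : Odd k) : 2 ∣ Nat.choose (2*r) k := by
  rcases r with _ | r'
  · rcases hk with ⟨t, rfl⟩
    simp [Nat.choose_eq_zero_of_lt]
  rcases hk with ⟨t, rfl⟩
  have hid := Nat.add_one_mul_choose_eq (2*r'+1) (2*t)
  have h2 : 2 ∣ Nat.choose (2*r'+2) (2*t+1) * (2*t+1) := by
    rw [show (2*r'+2) = (2*r'+1).succ by rfl, ← hid]
    exact Dvd.dvd.mul_right ⟨r'+1, by omega⟩ _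
  rcases (Nat.Prime.dvd_mul Nat.prime_two).mp h2 with h | h
  · simpa [show 2*(r'+1) = 2*r'+2 by ring] using h
  · omega

lemma lemA (r : ℕ) (hr : Odd r) (hr3 : 3 ≤ r) : 4 ∣ Nat.choose (2*r) r := by
  obtain ⟨s, rfl⟩ : ∃ s, r = s + 1 := ⟨r-1, by omega⟩
  rw [show 2*(s+1) = 2*s+2 by ring, even_choose]
  -- goal : 4 ∣ 2 * C(2s+1, s); suffices 2 ∣ C(2s+1, s)
  suffices h : 2 ∣ Nat.choose (2*s+1) s by
    rcases h with ⟨c, hc⟩; exact ⟨c, by omega⟩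
  have hseven : ∃ s', s = s' + 2 ∧ Even s := by
    rcases hr with ⟨t, ht⟩
    exact ⟨s - 2, by omega, ⟨t, by omega⟩⟩
  obtain ⟨s', hs', hse⟩ := hseven
  have hid := Nat.add_one_mul_choose_eq (2*s) s
  -- (2s+1) * C(2s, s) = C(2s+1, s+1) * (s+1)
  have hsymm : Nat.choose (2*s+1) (s+1) = Nat.choose (2*s+1) s := by
    have := Nat.choose_symm (n := 2*s+1) (k := s+1) (by omega)
    have e : 2*s+1 - (s+1) = s := by omega
    rw [e] at this; exact this.symm
  have hc : Nat.choose (2*s) s = 2 * Nat.choose (2*(s-1)+1) (s-1) := by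
    have := even_choose (s-1)
    rw [show 2*(s-1)+2 = 2*s by omega, show s-1+1 = s by omega] at this
    exact this
  have h2 : 2 ∣ Nat.choose (2*s+1) s * (s+1) := by
    rw [← hsymm, ← hid, hc]
    exact Dvd.dvd.mul_left ⟨Nat.choose (2*(s-1)+1) (s-1), rfl⟩ _
  rcases (Nat.Prime.dvd_mul Nat.prime_two).mp h2 with h | h
  · exact h
  · exfalso; rcases hse with ⟨t, ht⟩; omega

lemma lemT (N r : ℕ) (hN : 2 ≤ N) (hNe : 2 ∣ N) (hr : Odd r) :
    (4:ℕ) ∣ (∑ k ∈ Finset.range (2*r+1),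
      if (N:ℤ) ∣ ((k:ℤ) - r) then Nat.choose (2*r) k else 0) + 2^r := by
  -- condition implies k odd
  have hodd : ∀ k : ℕ, (N:ℤ) ∣ ((k:ℤ) - r) → Odd k := by
    intro k ⟨t, ht⟩
    obtain ⟨w, rfl⟩ := hNe
    obtain ⟨u, hu⟩ := hr
    have h2 : (k:ℤ) = 2*(u + w*t) + 1 := by
      push_cast [hu] at ht ⊢
      linarith [ht]
    have : Odd (k:ℤ) := ⟨u + w*t, h2⟩
    exact Int.odd_coe_nat k |>.mp (by exact_mod_cast this)
  by_cases hr1 : r = 1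
  · -- r = 1
    subst hr1
    have hnd : ¬ ((N:ℤ) ∣ (1:ℤ)) := by
      intro h
      have := Int.le_of_dvd one_pos h
      omega
    rw [show 2*1+1 = 3 from rfl, Finset.sum_range_succ, Finset.sum_range_succ,
      Finset.sum_range_one]
    norm_num [hnd]
  · -- r ≥ 3  (since r odd and r ≥ 2)
    have hr3 : 3 ≤ r := by rcases hr with ⟨u, rfl⟩; omega
    rw [← ZMod.natCast_eq_zero_iff]
    push_cast
    have h2r : ((2:ZMod 4))^r = 0 := by
      obtain ⟨s, rfl⟩ : ∃ s, r = s + 2 := ⟨r - 2, by omega⟩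
      rw [pow_add]
      simp [show ((2:ZMod 4))^2 = 0 by decide]
    rw [h2r, add_zero]
    set f : ℕ → ZMod 4 := fun k => if (N:ℤ) ∣ ((k:ℤ) - r) then ((Nat.choose (2*r) k : ZMod 4)) else 0 with hf
    have hrmem : r ∈ Finset.range (2*r+1) := by simp; omega
    rw [← Finset.add_sum_erase _ f hrmem]
    have hfr : f r = 0 := by
      rw [hf]; simp only [sub_self, dvd_zero, if_true]
      obtain ⟨c, hc⟩ := lemA r hr hr3
      rw [hc]; push_cast; ring_nf
      simp [show ((4:ZMod 4)) = 0 by decide]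
    rw [hfr, zero_add]
    apply Finset.sum_involution (fun k _ => 2*r - k)
    · -- f k + f (2r - k) = 0
      intro a ha
      have ha' : a ≤ 2*r ∧ a ≠ r := by
        simp only [Finset.mem_erase, Finset.mem_range] at ha; omega
      have hcastsub : ((2*r - a : ℕ) : ℤ) = 2*(r:ℤ) - a := by omega
      have hcond : ((N:ℤ) ∣ ((2*r - a : ℕ):ℤ) - r) ↔ ((N:ℤ) ∣ ((a:ℤ) - r)) := by
        rw [hcastsub]
        constructor <;> intro h
        · have := Int.dvd_neg.mpr h; convert this using 1; ring
        · have := Int.dvd_neg.mpr h; convert this using 1; ring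
      have hch : Nat.choose (2*r) (2*r - a) = Nat.choose (2*r) a := Nat.choose_symm ha'.1
      by_cases h : (N:ℤ) ∣ ((a:ℤ) - r)
      · rw [hf]; simp only [if_pos h, if_pos (hcond.mpr h), hch]
        obtain ⟨c, hc⟩ := lemB r a (hodd a h)
        rw [hc]; push_cast
        have h4 : ((4:ZMod 4)) = 0 := by decide
        linear_combination (c : ZMod 4) * h4
      · rw [hf]; simp only [if_neg h, if_neg (fun hx => h (hcond.mp hx))]
        simp
    · intro a ha _
      simp only [Finset.mem_erase, Finset.mem_range] at ha; omega
    · intro a ha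
      simp only [Finset.mem_erase, Finset.mem_range] at ha ⊢; omega
    · intro a ha
      simp only [Finset.mem_erase, Finset.mem_range] at ha; omega

lemma zeta_prim (n : ℕ) [NeZero n] : IsPrimitiveRoot (zeta n) (2*n) := by
  have h := Complex.isPrimitiveRoot_exp (2*n) (NeZero.ne' (2*n)).symm
  have e : ((2*n:ℕ):ℂ) = 2*(n:ℂ) := by push_cast; ring
  rw [e] at h
  exact h

lemma zeta_ne (n : ℕ) : zeta n ≠ 0 := Complex.exp_ne_zero _

lemma Del_a (n : ℕ) [NeZero n] (i : ZMod (2*n)) :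
    Del n (QuaternionGroup.a i) = 2 - zeta n ^ (i.val) - (zeta n ^ (i.val))⁻¹ := by
  have key : zeta n ^ ((i.val:ℤ)) * zeta n ^ (-(i.val:ℤ)) = 1 := by
    rw [← zpow_add₀ (zeta_ne n)]; simp
  have hz : zeta n ^ ((i.val:ℤ)) = zeta n ^ (i.val) := zpow_natCast _ _
  have hinv : zeta n ^ (-(i.val:ℤ)) = (zeta n ^ (i.val))⁻¹ := by
    rw [_root_.zpow_neg, hz]
  rw [Del, Matrix.det_fin_two]
  simp only [gam, one_mul, Matrix.sub_apply, Matrix.one_apply]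
  norm_num
  rw [← ZMod.natCast_val, hz]
  have hY : zeta n ^ (i.val) ≠ 0 := pow_ne_zero _ (zeta_ne n)
  field_simp
  ring

lemma Del_xa (n : ℕ) [NeZero n] (i : ZMod (2*n)) :
    Del n (QuaternionGroup.xa i) = 2 := by
  have key : zeta n ^ (-(i.val:ℤ)) * zeta n ^ ((i.val:ℤ)) = 1 := by
    rw [← zpow_add₀ (zeta_ne n)]; simp
  rw [Del, Matrix.det_fin_two]
  simp only [gam, one_mul, Matrix.sub_apply, Matrix.one_apply]
  norm_num
  rw [← ZMod.natCast_val, inv_mul_cancel₀ (zpow_ne_zero _ (zeta_ne n))]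
  norm_num

def qEquiv (n : ℕ) : ZMod (2*n) ⊕ ZMod (2*n) ≃ QuaternionGroup n where
  toFun := Sum.elim QuaternionGroup.a QuaternionGroup.xa
  invFun g := match g with
    | .a i => Sum.inl i
    | .xa i => Sum.inr i
  left_inv := by rintro (i | i) <;> rfl
  right_inv := by rintro (i | i) <;> rfl

lemma sum_split (n : ℕ) [NeZero n] (F : QuaternionGroup n → ℂ) :
    ∑ g : QuaternionGroup n, F g
      = (∑ i : ZMod (2*n), F (QuaternionGroup.a i)) + ∑ i : ZMod (2*n), F (QuaternionGroup.xa i) := by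
  rw [← Equiv.sum_comp (qEquiv n) F, Fintype.sum_sum_type]
  rfl

lemma zmod_sum_range (n : ℕ) [NeZero n] (f : ℕ → ℂ) :
    ∑ i : ZMod (2*n), f i.val = ∑ k ∈ Finset.range (2*n), f k := by
  have h2n : 0 < 2*n := by have := NeZero.pos n; omega
  exact Finset.sum_nbij' (fun i => i.val) (fun k => (k : ZMod (2*n)))
    (fun i _ => Finset.mem_range.mpr (ZMod.val_lt i))
    (fun k _ => Finset.mem_univ _)
    (fun i _ => ZMod.natCast_zmod_val i)
    (fun k hk => ZMod.val_cast_of_lt (Finset.mem_range.mp hk))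
    (fun i _ => rfl)

lemma geo (n : ℕ) [NeZero n] (c : ℤ) :
    ∑ i ∈ Finset.range (2*n), (zeta n ^ c) ^ i = if (2*(n:ℤ)) ∣ c then ((2*n : ℕ) : ℂ) else 0 := by
  have hprim := zeta_prim n
  by_cases h : zeta n ^ c = 1
  · rw [h]
    have : ((2*n:ℕ):ℤ) ∣ c := (hprim.zpow_eq_one_iff_dvd c).mp h
    rw [if_pos (by exact_mod_cast this)]
    simp
  · have hne : ¬ ((2*(n:ℤ)) ∣ c) := by
      intro hd
      exact h ((hprim.zpow_eq_one_iff_dvd c).mpr (by exact_mod_cast hd))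
    rw [if_neg hne, geom_sum_eq h]
    have hNpow : (zeta n ^ c) ^ (2*n) = 1 := by
      have e : (zeta n ^ c)^(2*n) = (zeta n ^ (2*n : ℕ))^c := by
        rw [← zpow_natCast (zeta n ^ c), ← _root_.zpow_mul, mul_comm,
          _root_.zpow_mul, zpow_natCast]
      rw [e, hprim.pow_eq_one, _root_.one_zpow]
    rw [hNpow, sub_self, zero_div]

lemma expand_pt (x : ℂ) (hx : x ≠ 0) (r : ℕ) (hr : Odd r) :
    (2 - x - x⁻¹)^r
      = ∑ k ∈ Finset.range (2*r+1), (-1:ℂ)^(k+1) * (Nat.choose (2*r) k) * (x^k * (x^r)⁻¹) := by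
  have h : 2 - x - x⁻¹ = -(x⁻¹ * (1-x)^2) := by field_simp; ring
  rw [h, hr.neg_pow, mul_pow, ← pow_mul, ← inv_pow]
  have hb : (1 - x)^(2*r) = ∑ k ∈ Finset.range (2*r+1), (-x)^k * (Nat.choose (2*r) k) := by
    have := add_pow (-x) 1 (2*r)
    simp only [one_pow, mul_one] at this
    rw [← this]; ring_nf
  rw [hb, Finset.mul_sum, neg_eq_iff_eq_neg, ← Finset.sum_neg_distrib]
  apply Finset.sum_congr rfl
  intro k _
  rw [neg_pow x k]
  ring


/-- For odd positive r, ⟨Δ^r, ρ₀⟩ = ℓ⁻¹ Σ_{g ∈ Q_ℓ} Δ(g)^r is an even integer. -/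
theorem stmt10 (j n : ℕ) [NeZero n] (hj : 3 ≤ j) (hn : 4 * n = 2 ^ j)
    (r : ℕ) (hr : Odd r) (hr' : 0 < r) :
    ∃ m : ℤ, (4 * n : ℂ)⁻¹ * ∑ g : QuaternionGroup n, Del n g ^ r = 2 * m := by
  have hz := zeta_ne n
  have hnpos := NeZero.pos n
  -- the arithmetic quantity
  set T : ℕ := ∑ k ∈ Finset.range (2*r+1),
      if ((2*n : ℕ):ℤ) ∣ ((k:ℤ) - r) then Nat.choose (2*r) k else 0 with hT
  obtain ⟨m₀, hm₀⟩ : (4:ℕ) ∣ T + 2^r := lemT (2*n) r (by omega) ⟨n, rfl⟩ hr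
  refine ⟨m₀, ?_⟩
  -- split the sum
  rw [sum_split n (fun g => Del n g ^ r)]
  have hxa : ∑ i : ZMod (2*n), Del n (QuaternionGroup.xa i) ^ r = (2*n : ℂ) * 2^r := by
    simp only [Del_xa]
    rw [Finset.sum_const, Finset.card_univ, ZMod.card, nsmul_eq_mul]
    push_cast; ring
  have ha : ∑ i : ZMod (2*n), Del n (QuaternionGroup.a i) ^ r = (2*n:ℂ) * (T : ℂ) := by
    have step1 : ∑ i : ZMod (2*n), Del n (QuaternionGroup.a i) ^ r
        = ∑ i ∈ Finset.range (2*n),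
            (2 - zeta n ^ i - (zeta n ^ i)⁻¹)^r := by
      rw [← zmod_sum_range n (fun v => (2 - zeta n ^ v - (zeta n ^ v)⁻¹)^r)]
      exact Finset.sum_congr rfl (fun i _ => by rw [Del_a])
    rw [step1]
    have hpt : ∀ i ∈ Finset.range (2*n), (2 - zeta n ^ i - (zeta n ^ i)⁻¹)^r
        = ∑ k ∈ Finset.range (2*r+1),
            (-1:ℂ)^(k+1) * (Nat.choose (2*r) k) * (zeta n ^ (((k:ℤ) - r)))^i := by
      intro i _
      rw [expand_pt (zeta n ^ i) (pow_ne_zero _ hz) r hr]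
      apply Finset.sum_congr rfl
      intro k _
      congr 1
      rw [← pow_mul, ← pow_mul, ← zpow_natCast (zeta n) (i*k), ← zpow_natCast (zeta n) (i*r),
        ← _root_.zpow_neg, ← zpow_add₀ hz,
        ← zpow_natCast (zeta n ^ (((k:ℤ) - r))) i, ← _root_.zpow_mul]
      congr 1
      push_cast
      ring
    rw [Finset.sum_congr rfl hpt, Finset.sum_comm]
    have hinner : ∀ k ∈ Finset.range (2*r+1),
        (∑ i ∈ Finset.range (2*n), (-1:ℂ)^(k+1) * (Nat.choose (2*r) k) * (zeta n ^ (((k:ℤ) - r)))^i)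
        = (2*n:ℂ) * (if ((2*n : ℕ):ℤ) ∣ ((k:ℤ) - r) then ((Nat.choose (2*r) k : ℕ) : ℂ) else 0) := by
      intro k _
      rw [← Finset.mul_sum, geo n ((k:ℤ) - r)]
      by_cases hd : ((2*n : ℕ):ℤ) ∣ ((k:ℤ) - r)
      · have hd' : (2*(n:ℤ)) ∣ ((k:ℤ) - r) := by exact_mod_cast hd
        rw [if_pos hd', if_pos hd]
        -- k is odd
        obtain ⟨t, ht⟩ := hd'
        obtain ⟨u, hu⟩ := hr
        have hkodd : Odd k := by
          have : Odd (k:ℤ) := ⟨u + n*t, by push_cast [hu] at ht ⊢; linarith [ht]⟩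
          exact Int.odd_coe_nat k |>.mp (by exact_mod_cast this)
        obtain ⟨v, hv⟩ := hkodd
        have hsign : (-1:ℂ)^(k+1) = 1 := by
          rw [hv, show 2*v+1+1 = 2*(v+1) by ring, pow_mul]
          norm_num
        rw [hsign]
        push_cast
        ring
      · have hd' : ¬ (2*(n:ℤ)) ∣ ((k:ℤ) - r) := by
          intro hx; exact hd (by exact_mod_cast hx)
        rw [if_neg hd', if_neg hd]
        ring
    rw [Finset.sum_congr rfl hinner, ← Finset.mul_sum]
    congr 1
    rw [hT]
    push_cast [apply_ite (fun x : ℕ => (x:ℂ))]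
    rfl
  rw [ha, hxa, ← mul_add]
  have h4n : (4*(n:ℂ)) ≠ 0 := mul_ne_zero (by norm_num) (Nat.cast_ne_zero.mpr (NeZero.ne n))
  have hsum : (T : ℂ) + 2^r = 4 * (m₀:ℂ) := by exact_mod_cast hm₀
  rw [hsum]
  push_cast
  have hn0 : (n:ℂ) ≠ 0 := Nat.cast_ne_zero.mpr (NeZero.ne n)
  field_simp
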